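/- Let d ≥ 2, let κ ∈ ℂ be nonzero, and let κ₁,…,κ_d ∈ ℂ satisfy Σᵢ κᵢ² = κ² (so that (κ, κ₁,…,κ_d) models a nonzero null covector). Then for all polynomials γ, δ ∈ ℂ[ξ₁,…,ξ_d] there exist polynomials α, β ∈ ℂ[ξ₁,…,ξ_d] solving the system: κβ − (Σᵢ κᵢ ∂α/∂ξᵢ) = γ and κΔα − (Σᵢ κᵢ ∂β/∂ξᵢ) = δ, where Δ = Σᵢ ∂²/∂ξᵢ². (Paper: Proposition 5.1, surjectivity of the operator D = k_a∂^a on polynomial solutions of the wave equation, in the space-and-time decomposed form of equations (1.4)–(1.5), for each fixed nonzero null momentum.) -/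

import Mathlib

/-!
Proposition 5.1 in space-and-time decomposed form (equations (1.4)–(1.5)):
for `d ≥ 2`, a nonzero `κ ∈ ℂ` and `κ₁,…,κ_d ∈ ℂ` with `Σᵢ κᵢ² = κ²`
(a nonzero null covector), the system
`κβ − Σᵢ κᵢ ∂α/∂ξᵢ = γ`, `κΔα − Σᵢ κᵢ ∂β/∂ξᵢ = δ`
is solvable in polynomials `α, β` for all polynomial data `γ, δ`.
-/

open MvPolynomial

/-- The Laplacian `Δ = Σᵢ ∂²/∂ξᵢ²` on `ℂ[ξ₁,…,ξ_d]`. -/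
noncomputable def lap {d : ℕ} (f : MvPolynomial (Fin d) ℂ) : MvPolynomial (Fin d) ℂ :=
  ∑ i : Fin d, pderiv i (pderiv i f)

/-- The directional derivative `Σᵢ κᵢ ∂/∂ξᵢ` on `ℂ[ξ₁,…,ξ_d]`. -/
noncomputable def kdel {d : ℕ} (κv : Fin d → ℂ) (f : MvPolynomial (Fin d) ℂ) :
    MvPolynomial (Fin d) ℂ :=
  ∑ i : Fin d, C (κv i) * pderiv i f

section NullMomentumAux
open Finsupp
variable {d : ℕ}


noncomputable def Lop (a : Fin d → Fin d → ℂ) :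
    MvPolynomial (Fin d) ℂ →ₗ[ℂ] MvPolynomial (Fin d) ℂ :=
  ∑ i : Fin d, ∑ j : Fin d, a i j • ((pderiv i).toLinearMap ∘ₗ (pderiv j).toLinearMap)

lemma Lop_apply (a : Fin d → Fin d → ℂ) (p : MvPolynomial (Fin d) ℂ) :
    Lop a p = ∑ i : Fin d, ∑ j : Fin d, C (a i j) * pderiv i (pderiv j p) := by
  simp [Lop, smul_eq_C_mul]

lemma Lop_monomial (a : Fin d → Fin d → ℂ) (s : Fin d →₀ ℕ) :
    Lop a (monomial s (1:ℂ)) = ∑ i : Fin d, ∑ j : Fin d,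
      monomial (s - single j 1 - single i 1)
        (a i j * (s j : ℂ) * (((s - single j 1 : Fin d →₀ ℕ) i : ℕ) : ℂ)) := by
  rw [Lop_apply]
  refine Finset.sum_congr rfl fun i _ => Finset.sum_congr rfl fun j _ => ?_
  rw [pderiv_monomial, pderiv_monomial, C_mul_monomial]
  ring_nf

lemma genuine {s : Fin d →₀ ℕ} {i j : Fin d} (hj : s j ≠ 0)
    (hi : (s - single j 1 : Fin d →₀ ℕ) i ≠ 0) :
    (s - single j 1 - single i 1) + single i 1 + single j 1 = s := by
  have h1 : single j 1 ≤ s := single_le_iff.mpr (Nat.one_le_iff_ne_zero.mpr hj)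
  have h2 : single i 1 ≤ s - single j 1 := single_le_iff.mpr (Nat.one_le_iff_ne_zero.mpr hi)
  rw [tsub_add_cancel_of_le h2, tsub_add_cancel_of_le h1]

lemma exists_of_mem_support_Lop (a : Fin d → Fin d → ℂ) (s : Fin d →₀ ℕ) {m' : Fin d →₀ ℕ}
    (h : m' ∈ (Lop a (monomial s (1:ℂ))).support) :
    ∃ i j : Fin d, a i j ≠ 0 ∧ s j ≠ 0 ∧ (s - single j 1 : Fin d →₀ ℕ) i ≠ 0 ∧
      m' = s - single j 1 - single i 1 := by
  rw [MvPolynomial.mem_support_iff, Lop_monomial, coeff_sum] at h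
  obtain ⟨i, -, hi⟩ := Finset.exists_ne_zero_of_sum_ne_zero h
  rw [coeff_sum] at hi
  obtain ⟨j, -, hj⟩ := Finset.exists_ne_zero_of_sum_ne_zero hi
  rw [coeff_monomial] at hj
  refine ⟨i, j, ?_⟩
  by_cases hc : s - single j 1 - single i 1 = m'
  · rw [if_pos hc] at hj
    refine ⟨fun h => ?_, fun h => ?_, fun h => ?_, hc.symm⟩ <;> rw [h] at hj <;> simp at hj
  · rw [if_neg hc] at hj; exact absurd rfl hj

lemma coeff_Lop (a : Fin d → Fin d → ℂ) (m v : Fin d →₀ ℕ) :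
    coeff m (Lop a (monomial (m + v) (1:ℂ))) = ∑ i : Fin d, ∑ j : Fin d,
      (if single i 1 + single j 1 = v then
        a i j * (((m + v) j : ℕ) : ℂ) * (((m + v - single j 1 : Fin d →₀ ℕ) i : ℕ) : ℂ)
      else 0) := by
  rw [Lop_monomial, coeff_sum]
  refine Finset.sum_congr rfl fun i _ => ?_
  rw [coeff_sum]
  refine Finset.sum_congr rfl fun j _ => ?_
  rw [coeff_monomial]
  by_cases hv : single i 1 + single j 1 = v
  · rw [if_pos hv, if_pos]
    rw [← hv, ← add_assoc, add_tsub_cancel_right, add_tsub_cancel_right]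
  · rw [if_neg hv]
    by_cases hc : a i j * (((m + v) j : ℕ) : ℂ) *
        (((m + v - single j 1 : Fin d →₀ ℕ) i : ℕ) : ℂ) = 0
    · rw [hc]; simp
    · rw [if_neg]
      intro heq
      apply hv
      have hj : (m + v) j ≠ 0 := by
        intro h; apply hc; rw [h]; simp
      have hi : (m + v - single j 1 : Fin d →₀ ℕ) i ≠ 0 := by
        intro h; apply hc; rw [h]; simp
      have := genuine hj hi
      rw [heq] at this
      have : m + (single i 1 + single j 1) = m + v := by rw [← add_assoc]; exact this
      exact add_left_cancel this


noncomputable def degw (m : Fin d →₀ ℕ) : ℕ := m.sum fun _ n => n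

lemma apply_le_degw (m : Fin d →₀ ℕ) (x : Fin d) : m x ≤ degw m := by
  by_cases h : x ∈ m.support
  · exact Finset.single_le_sum (fun _ _ => Nat.zero_le _) h
  · rw [Finsupp.notMem_support_iff.mp h]; exact Nat.zero_le _

lemma degw_add (f g : Fin d →₀ ℕ) : degw (f + g) = degw f + degw g :=
  Finsupp.sum_add_index' (fun _ => rfl) (fun _ _ _ => rfl)

lemma degw_single (i : Fin d) : degw (single i 1 : Fin d →₀ ℕ) = 1 := by
  simp [degw, Finsupp.sum_single_index]

theorem Lop_surjective (a : Fin d → Fin d → ℂ) (k l : Fin d)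
    (H1 : ∀ i j : Fin d, a i j ≠ 0 →
      single i 1 + single j 1 = (single k 1 + single l 1 : Fin d →₀ ℕ) ∨
      ((single i 1 + single j 1 : Fin d →₀ ℕ) k + (single i 1 + single j 1 : Fin d →₀ ℕ) l <
       (single k 1 + single l 1 : Fin d →₀ ℕ) k + (single k 1 + single l 1 : Fin d →₀ ℕ) l))
    (H2 : ∀ m : Fin d →₀ ℕ,
      coeff m (Lop a (monomial (m + (single k 1 + single l 1)) (1:ℂ))) ≠ 0) :
    Function.Surjective (Lop a) := by
  set v : Fin d →₀ ℕ := single k 1 + single l 1 with hv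
  set μ : (Fin d →₀ ℕ) → ℕ := fun m => 2 * degw m - (m k + m l) with hμ
  set R := LinearMap.range (Lop a) with hR
  have key : ∀ t : ℕ, ∀ p : MvPolynomial (Fin d) ℂ, (∀ m ∈ p.support, μ m < t) → p ∈ R := by
    intro t
    induction t using Nat.strong_induction_on with
    | _ t IH =>
      -- first: single monomials
      have hmono : ∀ m : Fin d →₀ ℕ, μ m < t → (monomial m (1:ℂ)) ∈ R := by
        intro m hm
        set s : Fin d →₀ ℕ := m + v with hs
        set q := Lop a (monomial s (1:ℂ)) with hq
        have hqR : q ∈ R := ⟨_, rfl⟩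
        set c := coeff m q with hc
        have hcne : c ≠ 0 := H2 m
        set r := q - monomial m c with hr
        have hrsupp : ∀ m' ∈ r.support, μ m' < μ m := by
          intro m' hm'
          have hne : m' ≠ m := by
            intro h
            rw [MvPolynomial.mem_support_iff, h, hr] at hm'
            simp [coeff_sub, coeff_monomial, hc] at hm'
          have hm'q : m' ∈ q.support := by
            rw [MvPolynomial.mem_support_iff] at hm' ⊢
            intro h
            apply hm'
            rw [hr, coeff_sub, h, coeff_monomial, if_neg (fun hh => hne hh.symm), sub_zero]
          obtain ⟨i, j, haij, hsj, hsi, hm'eq⟩ := exists_of_mem_support_Lop a s hm'q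
          have hgen : m' + single i 1 + single j 1 = s := hm'eq ▸ genuine hsj hsi
          rcases H1 i j haij with hcase | hcase
          · exfalso
            apply hne
            have : m' + (single i 1 + single j 1) = m + v := by
              rw [← add_assoc]; exact hgen
            rw [hcase] at this
            exact add_right_cancel this
          · -- degree bookkeeping
            have hdeg : degw m' + 2 = degw m + 2 := by
              have h1 := congrArg degw hgen
              rw [degw_add, degw_add, hs, degw_add, degw_single, degw_single, hv,
                degw_add, degw_single, degw_single] at h1
              omega
            have hk : m' k + (single i 1 + single j 1 : Fin d →₀ ℕ) k = m k + v k := by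
              have := congrArg (fun f : Fin d →₀ ℕ => f k) hgen
              simp only [Finsupp.add_apply, hs] at this ⊢
              omega
            have hl : m' l + (single i 1 + single j 1 : Fin d →₀ ℕ) l = m l + v l := by
              have := congrArg (fun f : Fin d →₀ ℕ => f l) hgen
              simp only [Finsupp.add_apply, hs] at this ⊢
              omega
            have hb1 : m' k + m' l ≤ 2 * degw m' :=
              Nat.add_le_add (apply_le_degw m' k) (apply_le_degw m' l) |>.trans (by omega)
            have hb2 : m k + m l ≤ 2 * degw m :=
              Nat.add_le_add (apply_le_degw m k) (apply_le_degw m l) |>.trans (by omega)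
            simp only [hμ]
            omega
        have hrR : r ∈ R := IH (μ m) hm r hrsupp
        have hmcR : monomial m c ∈ R := by
          have : monomial m c = q - r := by rw [hr]; ring
          rw [this]; exact Submodule.sub_mem _ hqR hrR
        have : monomial m (1:ℂ) = c⁻¹ • monomial m c := by
          rw [MvPolynomial.smul_monomial, smul_eq_mul, inv_mul_cancel₀ hcne]
        rw [this]
        exact Submodule.smul_mem _ _ hmcR
      intro p hp
      have hrepr : p = ∑ m ∈ p.support, monomial m (coeff m p) :=
        (support_sum_monomial_coeff p).symm
      rw [hrepr]
      refine Submodule.sum_mem _ fun m hm => ?_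
      have : monomial m (coeff m p) = (coeff m p) • monomial m (1:ℂ) := by
        rw [MvPolynomial.smul_monomial, smul_eq_mul, mul_one]
      rw [this]
      exact Submodule.smul_mem _ _ (hmono m (hp m hm))
  intro p
  have : p ∈ R := key (p.support.sup μ + 1) p fun m hm =>
    Nat.lt_succ_of_le (Finset.le_sup hm)
  exact this


lemma kdel_kdel (κv : Fin d → ℂ) (p : MvPolynomial (Fin d) ℂ) :
    kdel κv (kdel κv p) = ∑ i : Fin d, ∑ j : Fin d, C (κv i * κv j) * pderiv i (pderiv j p) := by
  rw [kdel]
  refine Finset.sum_congr rfl fun i _ => ?_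
  rw [kdel, map_sum, Finset.mul_sum]
  refine Finset.sum_congr rfl fun j _ => ?_
  rw [pderiv_C_mul, map_mul C _ _]
  ring

lemma Lop_amat (κ : ℂ) (κv : Fin d → ℂ) (p : MvPolynomial (Fin d) ℂ) :
    Lop (fun i j => (if i = j then κ ^ 2 else 0) - κv i * κv j) p
      = C (κ ^ 2) * lap p - kdel κv (kdel κv p) := by
  rw [Lop_apply, kdel_kdel, lap, Finset.mul_sum, ← Finset.sum_sub_distrib]
  refine Finset.sum_congr rfl fun i _ => ?_
  have hrw : C (κ ^ 2) * pderiv i (pderiv i p)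
      = ∑ j : Fin d, (if i = j then C (κ ^ 2) * pderiv i (pderiv j p) else 0) := by
    rw [Finset.sum_ite_eq]; simp
  rw [hrw, ← Finset.sum_sub_distrib]
  refine Finset.sum_congr rfl fun j _ => ?_
  rw [map_sub, sub_mul, map_mul]
  refine congrArg₂ (· - ·) ?_ rfl
  split_ifs with h
  · rfl
  · rw [map_zero, zero_mul]

lemma single_add_single_eq {i j k l : Fin d}
    (h : (single i 1 + single j 1 : Fin d →₀ ℕ) = single k 1 + single l 1) :
    (i = k ∧ j = l) ∨ (i = l ∧ j = k) := by
  have hi : i = k ∨ i = l := by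
    by_contra hc
    push_neg at hc
    have h1 := DFunLike.congr_fun h i
    rw [Finsupp.add_apply, Finsupp.add_apply, Finsupp.single_apply, Finsupp.single_apply,
      Finsupp.single_apply, Finsupp.single_apply, if_pos rfl,
      if_neg (fun hh : k = i => hc.1 hh.symm), if_neg (fun hh : l = i => hc.2 hh.symm)] at h1
    omega
  rcases hi with rfl | rfl
  · left
    refine ⟨rfl, ?_⟩
    have := add_left_cancel h
    exact Finsupp.single_left_injective one_ne_zero this
  · right
    refine ⟨rfl, ?_⟩
    rw [add_comm (single k 1) (single i 1)] at h
    have := add_left_cancel h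
    exact Finsupp.single_left_injective one_ne_zero this

-- Case 1: some diagonal entry nonzero
lemma H2_case1 (a : Fin d → Fin d → ℂ) (k : Fin d) (hakk : a k k ≠ 0) (m : Fin d →₀ ℕ) :
    coeff m (Lop a (monomial (m + (single k 1 + single k 1)) (1:ℂ))) ≠ 0 := by
  rw [coeff_Lop]
  set v : Fin d →₀ ℕ := single k 1 + single k 1 with hv
  have hzero : ∀ i j : Fin d, ¬(i = k ∧ j = k) →
      (if (single i 1 + single j 1 : Fin d →₀ ℕ) = v then
        a i j * (((m + v) j : ℕ) : ℂ) * (((m + v - single j 1 : Fin d →₀ ℕ) i : ℕ) : ℂ)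
      else 0) = 0 := by
    intro i j hij
    rw [if_neg]
    intro hc
    rcases single_add_single_eq hc with ⟨h1, h2⟩ | ⟨h1, h2⟩ <;> exact hij ⟨h1, h2⟩
  rw [Finset.sum_eq_single k
    (fun i _ hik => Finset.sum_eq_zero fun j _ => hzero i j fun hh => hik hh.1)
    (by intro h; exact absurd (Finset.mem_univ k) h)]
  rw [Finset.sum_eq_single k (fun j _ hjk => hzero k j fun hh => hjk hh.2)
    (by intro h; exact absurd (Finset.mem_univ k) h)]
  rw [if_pos rfl]
  have e1 : (m + v) k = m k + 2 := by
    simp [hv, Finsupp.single_apply]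
  have e2 : (m + v - single k 1 : Fin d →₀ ℕ) k = m k + 1 := by
    rw [Finsupp.tsub_apply, e1, Finsupp.single_apply, if_pos rfl]
    omega
  rw [e1, e2]
  refine mul_ne_zero (mul_ne_zero hakk ?_) ?_ <;> exact Nat.cast_ne_zero.mpr (by omega)

-- Case 2: k ≠ l, off-diagonal nonzero
lemma H2_case2 (a : Fin d → Fin d → ℂ) (k l : Fin d) (hkl : k ≠ l)
    (hsum : a k l + a l k ≠ 0) (m : Fin d →₀ ℕ) :
    coeff m (Lop a (monomial (m + (single k 1 + single l 1)) (1:ℂ))) ≠ 0 := by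
  rw [coeff_Lop]
  set v : Fin d →₀ ℕ := single k 1 + single l 1 with hv
  set F : Fin d → Fin d → ℂ := fun i j =>
    a i j * (((m + v) j : ℕ) : ℂ) * (((m + v - single j 1 : Fin d →₀ ℕ) i : ℕ) : ℂ) with hF
  have hterm : ∀ i j : Fin d,
      (if (single i 1 + single j 1 : Fin d →₀ ℕ) = v then F i j else 0)
      = (if i = k ∧ j = l then F i j else 0) + (if i = l ∧ j = k then F i j else 0) := by
    intro i j
    by_cases h1 : i = k ∧ j = l
    · obtain ⟨rfl, rfl⟩ := h1
      rw [if_pos rfl, if_pos ⟨rfl, rfl⟩, if_neg (fun hh => hkl hh.1),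
        add_zero]
    · by_cases h2 : i = l ∧ j = k
      · obtain ⟨rfl, rfl⟩ := h2
        rw [if_pos (add_comm _ _), if_neg h1, if_pos ⟨rfl, rfl⟩, zero_add]
      · rw [if_neg h1, if_neg h2, add_zero, if_neg]
        intro hc
        rcases single_add_single_eq hc with hh | hh
        · exact h1 hh
        · exact h2 hh
  have hcollapse : ∀ (p q : Fin d) (G : Fin d → Fin d → ℂ),
      (∑ i : Fin d, ∑ j : Fin d, if i = p ∧ j = q then G i j else 0) = G p q := by
    intro p q G
    rw [Finset.sum_eq_single p (fun i _ hip => Finset.sum_eq_zero fun j _ =>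
        if_neg (fun hh => hip hh.1))
      (by intro h; exact absurd (Finset.mem_univ p) h)]
    rw [Finset.sum_eq_single q (fun j _ hjq => if_neg (fun hh => hjq hh.2))
      (by intro h; exact absurd (Finset.mem_univ q) h)]
    rw [if_pos ⟨rfl, rfl⟩]
  calc (∑ i : Fin d, ∑ j : Fin d,
        if (single i 1 + single j 1 : Fin d →₀ ℕ) = v then F i j else 0)
      = (∑ i : Fin d, ∑ j : Fin d,
          ((if i = k ∧ j = l then F i j else 0) + (if i = l ∧ j = k then F i j else 0))) := by
        exact Finset.sum_congr rfl fun i _ => Finset.sum_congr rfl fun j _ => hterm i j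
    _ = (∑ i : Fin d, ∑ j : Fin d, if i = k ∧ j = l then F i j else 0)
          + (∑ i : Fin d, ∑ j : Fin d, if i = l ∧ j = k then F i j else 0) := by
        rw [← Finset.sum_add_distrib]
        exact Finset.sum_congr rfl fun i _ => Finset.sum_add_distrib
    _ = F k l + F l k := by rw [hcollapse, hcollapse]
    _ ≠ 0 := by
        have e1 : (m + v) l = m l + 1 := by
          simp [hv, Finsupp.single_apply, hkl, (Ne.symm hkl)]
        have e2 : (m + v) k = m k + 1 := by
          simp [hv, Finsupp.single_apply, hkl, (Ne.symm hkl)]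
        have e3 : (m + v - single l 1 : Fin d →₀ ℕ) k = m k + 1 := by
          rw [Finsupp.tsub_apply, e2, Finsupp.single_apply, if_neg (fun hh : l = k => hkl hh.symm)]
          omega
        have e4 : (m + v - single k 1 : Fin d →₀ ℕ) l = m l + 1 := by
          rw [Finsupp.tsub_apply, e1, Finsupp.single_apply, if_neg (fun hh : k = l => hkl hh)]
          omega
        rw [hF]
        simp only [e1, e2, e3, e4]
        have : a k l * (((m l + 1 : ℕ) : ℂ)) * (((m k + 1 : ℕ) : ℂ))
            + a l k * (((m k + 1 : ℕ) : ℂ)) * (((m l + 1 : ℕ) : ℂ))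
            = (a k l + a l k) * (((m k + 1 : ℕ) : ℂ)) * (((m l + 1 : ℕ) : ℂ)) := by ring
        rw [this]
        refine mul_ne_zero (mul_ne_zero hsum ?_) ?_ <;> exact Nat.cast_ne_zero.mpr (by omega)

lemma kdel_add (κv : Fin d → ℂ) (p q : MvPolynomial (Fin d) ℂ) :
    kdel κv (p + q) = kdel κv p + kdel κv q := by
  rw [kdel, kdel, kdel, ← Finset.sum_add_distrib]
  refine Finset.sum_congr rfl fun i _ => ?_
  rw [map_add, mul_add]

lemma kdel_C_mul (κv : Fin d → ℂ) (c : ℂ) (p : MvPolynomial (Fin d) ℂ) :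
    kdel κv (C c * p) = C c * kdel κv p := by
  rw [kdel, kdel, Finset.mul_sum]
  refine Finset.sum_congr rfl fun i _ => ?_
  rw [pderiv_C_mul]
  ring

end NullMomentumAux

open Finsupp in
theorem exists_solution_of_null_momentum_system (d : ℕ) (hd : 2 ≤ d)
    (κ : ℂ) (hκ : κ ≠ 0) (κv : Fin d → ℂ) (hnull : ∑ i, κv i ^ 2 = κ ^ 2)
    (γ δ : MvPolynomial (Fin d) ℂ) :
    ∃ α β : MvPolynomial (Fin d) ℂ,
      C κ * β - kdel κv α = γ ∧ C κ * lap α - kdel κv β = δ := by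
  set a : Fin d → Fin d → ℂ := fun i j => (if i = j then κ ^ 2 else 0) - κv i * κv j with ha
  -- surjectivity of Lop a
  have hsurj : Function.Surjective (Lop a) := by
    by_cases hcase : ∃ k : Fin d, κ ^ 2 - κv k ^ 2 ≠ 0
    · obtain ⟨k, hk⟩ := hcase
      refine Lop_surjective a k k ?_ ?_
      · intro i j _
        by_cases hik : i = k
        · by_cases hjk : j = k
          · left; rw [hik, hjk]
          · right
            simp only [Finsupp.add_apply, Finsupp.single_apply]
            split_ifs <;> simp_all <;> omega
        · right
          simp only [Finsupp.add_apply, Finsupp.single_apply]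
          split_ifs <;> simp_all <;> omega
      · refine H2_case1 a k ?_
        show (if k = k then κ ^ 2 else 0) - κv k * κv k ≠ 0
        rw [if_pos rfl, ← sq]
        exact hk
    · push_neg at hcase
      set k : Fin d := ⟨0, by omega⟩ with hkdef
      set l : Fin d := ⟨1, by omega⟩ with hldef
      have hkl : k ≠ l := by
        intro h
        rw [hkdef, hldef, Fin.mk.injEq] at h
        omega
      have hdiag : ∀ i : Fin d, a i i = 0 := by
        intro i
        have h := hcase i
        rw [sub_eq_zero] at h
        show (if i = i then κ ^ 2 else 0) - κv i * κv i = 0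
        rw [if_pos rfl, h, sq]
        ring
      have hκvne : ∀ i : Fin d, κv i ≠ 0 := by
        intro i h
        have hc := hcase i
        rw [h] at hc
        simp at hc
        exact hκ hc
      refine Lop_surjective a k l ?_ ?_
      · intro i j haij
        have hij : i ≠ j := by
          intro h; rw [h] at haij; exact haij (hdiag j)
        by_cases h1 : i = k ∧ j = l
        · left; rw [h1.1, h1.2]
        · by_cases h2 : i = l ∧ j = k
          · left; rw [h2.1, h2.2]; exact add_comm _ _
          · right
            simp only [Finsupp.add_apply, Finsupp.single_apply]
            split_ifs <;> simp_all <;> omega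
      · refine H2_case2 a k l hkl ?_
        show ((if k = l then κ ^ 2 else 0) - κv k * κv l)
            + ((if l = k then κ ^ 2 else 0) - κv l * κv k) ≠ 0
        rw [if_neg hkl, if_neg (fun hh : l = k => hkl hh.symm)]
        have : (0:ℂ) - κv k * κv l + (0 - κv l * κv k) = -(2 * (κv k * κv l)) := by ring
        rw [this]
        simp only [neg_ne_zero]
        exact mul_ne_zero two_ne_zero (mul_ne_zero (hκvne k) (hκvne l))
  -- now solve the system
  obtain ⟨α, hα⟩ := hsurj (C κ * δ + kdel κv γ)
  rw [Lop_amat] at hα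
  refine ⟨α, C κ⁻¹ * (γ + kdel κv α), ?_, ?_⟩
  · rw [← mul_assoc, ← map_mul, mul_inv_cancel₀ hκ, map_one, one_mul, add_sub_cancel_right]
  · have hC : (C κ : MvPolynomial (Fin d) ℂ) ≠ 0 := by
      simpa using hκ
    apply mul_left_cancel₀ hC
    rw [kdel_C_mul, kdel_add]
    have h2 : (C κ : MvPolynomial (Fin d) ℂ) * C κ⁻¹ = 1 := by
      rw [← map_mul, mul_inv_cancel₀ hκ, map_one]
    have h1 : C (κ ^ 2) * lap α - kdel κv (kdel κv α) = C κ * δ + kdel κv γ := hα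
    have hpow : (C (κ ^ 2) : MvPolynomial (Fin d) ℂ) = C κ * C κ := by
      rw [← map_mul, sq]
    rw [hpow] at h1
    linear_combination h1 - (kdel κv (kdel κv α) + kdel κv γ) * h2
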